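/- Let V be a finite set, E a finite multiset of edges on V (each edge an unordered pair of distinct vertices), and let f : 2^V → ℤ be a skew-supermodular function that is non-trivial (there exists S ⊊ V, S ≠ ∅, with f(S) > 0). Consider the polytope P = { x ∈ ℝ^E : 0 ≤ x_e ≤ 1 for all e ∈ E, and Σ_{e ∈ δ(S)} x_e ≥ f(S) for all S ⊆ V }. If x̄ is an extreme point of P, then there exists an edge e ∈ E with x̄_e ≥ 1/2. -/

import Mathlib

open Finset

/-- Skew-supermodularity of an integer-valued set function. -/
def SkewSupermodular {V : Type*} [DecidableEq V] (f : Finset V → ℤ) : Prop :=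
  ∀ A B : Finset V,
    f A + f B ≤ f (A ∩ B) + f (A ∪ B) ∨ f A + f B ≤ f (A \ B) + f (B \ A)

/-- `δ(T)`: the indices of edges with exactly one endpoint in `T`. Edges are given as an
indexed family with endpoint maps `a b : ι → V`. -/
def cutEdges {V ι : Type*} [DecidableEq V] [Fintype ι] (a b : ι → V) (T : Finset V) :
    Finset ι :=
  Finset.univ.filter (fun i => ¬((a i ∈ T) ↔ (b i ∈ T)))

section B
variable {V ι : Type*} [Fintype V] [DecidableEq V] [Fintype ι]

namespace Jain
noncomputable def indR (P : Prop) : ℝ := @ite _ P (Classical.dec P) 1 0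
lemma indR_of (P : Prop) (h : P) : indR P = 1 := by unfold indR; split <;> tauto
lemma indR_of_not (P : Prop) (h : ¬P) : indR P = 0 := by unfold indR; split <;> tauto
lemma indR_nonneg (P : Prop) : 0 ≤ indR P := by unfold indR; split <;> norm_num
lemma indR_congr {P Q : Prop} (h : P ↔ Q) : indR P = indR Q := by
  by_cases hP : P
  · rw [indR_of _ hP, indR_of _ (h.1 hP)]
  · rw [indR_of_not _ hP, indR_of_not _ (fun hq => hP (h.2 hq))]

section Cross
variable {V : Type*} [DecidableEq V]

def Crosses (A B : Finset V) : Prop := (A ∩ B).Nonempty ∧ ¬A ⊆ B ∧ ¬B ⊆ A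

lemma crosses_symm {A B : Finset V} (h : Crosses A B) : Crosses B A := by
  obtain ⟨h1, h2, h3⟩ := h
  exact ⟨by rwa [Finset.inter_comm], h3, h2⟩

lemma not_crosses_iff {A B : Finset V} :
    ¬Crosses A B ↔ A ⊆ B ∨ B ⊆ A ∨ A ∩ B = ∅ := by
  unfold Crosses
  constructor
  · intro h
    by_cases h1 : A ⊆ B
    · exact Or.inl h1
    by_cases h2 : B ⊆ A
    · exact Or.inr (Or.inl h2)
    refine Or.inr (Or.inr ?_)
    by_contra h3
    exact h ⟨Finset.nonempty_iff_ne_empty.2 h3, h1, h2⟩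
  · rintro (h | h | h) ⟨h1, h2, h3⟩
    · exact h2 h
    · exact h3 h
    · exact Finset.not_nonempty_empty (h ▸ h1)

lemma cross_inter {S W W' : Finset V} (hWW' : ¬Crosses W' W)
    (h : Crosses W' (S ∩ W)) : Crosses W' S := by
  obtain ⟨⟨e, he⟩, h2, h3⟩ := h
  simp only [Finset.mem_inter] at he
  rw [not_crosses_iff] at hWW'
  by_contra hq
  rw [not_crosses_iff] at hq
  rcases hWW' with hc | hc | hc
  · -- W' ⊆ W
    rcases hq with hq | hq | hq
    · -- W' ⊆ S : then W' ⊆ S ∩ W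
      exact h2 (fun t ht => Finset.mem_inter.2 ⟨hq ht, hc ht⟩)
    · -- S ⊆ W' : S ∩ W ⊆ W'
      exact h3 (fun t ht => hq (Finset.mem_inter.1 ht).1)
    · -- S ∩ W' = ∅ : e ∈ W' ∩ S ∩ W
      have : e ∈ W' ∩ S := Finset.mem_inter.2 ⟨he.1, he.2.1⟩
      rw [hq] at this; exact absurd this (Finset.notMem_empty e)
  · -- W ⊆ W' : S ∩ W ⊆ W'
    exact h3 (fun t ht => hc (Finset.mem_inter.1 ht).2)
  · -- W' ∩ W = ∅
    have : e ∈ W' ∩ W := Finset.mem_inter.2 ⟨he.1, he.2.2⟩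
    rw [hc] at this; exact absurd this (Finset.notMem_empty e)

lemma cross_union {S W W' : Finset V} (hSW : Crosses S W) (hWW' : ¬Crosses W' W)
    (h : Crosses W' (S ∪ W)) : Crosses W' S := by
  obtain ⟨⟨e, he⟩, h2, h3⟩ := h
  simp only [Finset.mem_inter, Finset.mem_union] at he
  rw [not_crosses_iff] at hWW'
  by_contra hq
  rw [not_crosses_iff] at hq
  obtain ⟨y, hy⟩ := Finset.not_subset.1 h2  -- y ∈ W', y ∉ S ∪ W
  obtain ⟨z, hz⟩ := Finset.not_subset.1 h3  -- z ∈ S ∪ W, z ∉ W'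
  simp only [Finset.mem_union, not_or] at hy hz
  rcases hWW' with hc | hc | hc
  · -- W' ⊆ W : W' ⊆ S ∪ W
    exact h2 (fun t ht => Finset.mem_union.2 (Or.inr (hc ht)))
  · -- W ⊆ W'
    rcases hq with hq | hq | hq
    · exact hy.2.1 (hq hy.1)
    · -- S ⊆ W' : then S ∪ W ⊆ W', contradicting z
      rcases hz.1 with hzS | hzW
      · exact hz.2 (hq hzS)
      · exact hz.2 (hc hzW)
    · -- S ∩ W' = ∅ : but S ∩ W ⊆ S ∩ W' nonempty
      obtain ⟨w, hw⟩ := hSW.1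
      simp only [Finset.mem_inter] at hw
      have : w ∈ W' ∩ S := Finset.mem_inter.2 ⟨hc hw.2, hw.1⟩
      rw [hq] at this; exact absurd this (Finset.notMem_empty w)
  · -- W' ∩ W = ∅
    rcases hq with hq | hq | hq
    · exact hy.2.1 (hq hy.1)
    · -- S ⊆ W' and S ∩ W ≠ ∅ : w ∈ W' ∩ W
      obtain ⟨w, hw⟩ := hSW.1
      simp only [Finset.mem_inter] at hw
      have : w ∈ W' ∩ W := Finset.mem_inter.2 ⟨hq hw.1, hw.2⟩
      rw [hc] at this; exact absurd this (Finset.notMem_empty w)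
    · -- S ∩ W' = ∅ : e ∈ W' ∩ (S ∪ W); e ∉ W (disj), so e ∈ S ∩ W'
      rcases he.2 with heS | heW
      · have : e ∈ W' ∩ S := Finset.mem_inter.2 ⟨he.1, heS⟩
        rw [hq] at this; exact absurd this (Finset.notMem_empty e)
      · have : e ∈ W' ∩ W := Finset.mem_inter.2 ⟨he.1, heW⟩
        rw [hc] at this; exact absurd this (Finset.notMem_empty e)

lemma cross_sdiff₁ {S W W' : Finset V} (hSW : Crosses S W) (hWW' : ¬Crosses W' W)
    (h : Crosses W' (S \ W)) : Crosses W' S := by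
  obtain ⟨⟨e, he⟩, h2, h3⟩ := h
  simp only [Finset.mem_inter, Finset.mem_sdiff] at he
  rw [not_crosses_iff] at hWW'
  by_contra hq
  rw [not_crosses_iff] at hq
  obtain ⟨z, hz⟩ := Finset.not_subset.1 h3  -- z ∈ S \ W, z ∉ W'
  simp only [Finset.mem_sdiff] at hz
  rcases hWW' with hc | hc | hc
  · -- W' ⊆ W : but e ∈ W' and e ∉ W
    exact he.2.2 (hc he.1)
  · -- W ⊆ W'
    rcases hq with hq | hq | hq
    · -- W' ⊆ S : W' ⊆ ... then show W' crosses S\W fails? need contradiction: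
      -- W' ⊆ S, W ⊆ W' ⊆ S contradicts ¬W ⊆ S (from hSW)
      exact hSW.2.2 (fun t ht => hq (hc ht))
    · -- S ⊆ W' : z ∈ S, z ∉ W'
      exact hz.2 (hq hz.1.1)
    · -- S ∩ W' = ∅ : e ∈ W' ∩ S
      have : e ∈ W' ∩ S := Finset.mem_inter.2 ⟨he.1, he.2.1⟩
      rw [hq] at this; exact absurd this (Finset.notMem_empty e)
  · -- W' ∩ W = ∅
    rcases hq with hq | hq | hq
    · -- W' ⊆ S : then W' ⊆ S \ W since W' ∩ W = ∅
      refine h2 (fun t ht => Finset.mem_sdiff.2 ⟨hq ht, fun htW => ?_⟩)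
      have : t ∈ W' ∩ W := Finset.mem_inter.2 ⟨ht, htW⟩
      rw [hc] at this; exact absurd this (Finset.notMem_empty t)
    · exact hz.2 (hq hz.1.1)
    · have : e ∈ W' ∩ S := Finset.mem_inter.2 ⟨he.1, he.2.1⟩
      rw [hq] at this; exact absurd this (Finset.notMem_empty e)

lemma cross_sdiff₂ {S W W' : Finset V} (hSW : Crosses S W) (hWW' : ¬Crosses W' W)
    (h : Crosses W' (W \ S)) : Crosses W' S := by
  obtain ⟨⟨e, he⟩, h2, h3⟩ := h
  simp only [Finset.mem_inter, Finset.mem_sdiff] at he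
  rw [not_crosses_iff] at hWW'
  by_contra hq
  rw [not_crosses_iff] at hq
  obtain ⟨y, hy⟩ := Finset.not_subset.1 h2  -- y ∈ W', y ∉ W \ S
  simp only [Finset.mem_sdiff, not_and, not_not] at hy
  rcases hWW' with hc | hc | hc
  · -- W' ⊆ W
    rcases hq with hq | hq | hq
    · -- W' ⊆ S : e ∈ W', e ∉ S
      exact he.2.2 (hq he.1)
    · -- S ⊆ W' ⊆ W contradicts hSW
      exact hSW.2.1 (fun t ht => hc (hq ht))
    · -- S ∩ W' = ∅ : y ∈ W' ⊆ W, so y ∈ S (from hy), y ∈ S ∩ W'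
      have hyS : y ∈ S := hy.2 (hc hy.1)
      have : y ∈ W' ∩ S := Finset.mem_inter.2 ⟨hy.1, hyS⟩
      rw [hq] at this; exact absurd this (Finset.notMem_empty y)
  · -- W ⊆ W' : W \ S ⊆ W ⊆ W'
    exact h3 (fun t ht => hc (Finset.mem_sdiff.1 ht).1)
  · -- W' ∩ W = ∅ : e ∈ W' ∩ (W \ S) ⊆ W' ∩ W
    have : e ∈ W' ∩ W := Finset.mem_inter.2 ⟨he.1, he.2.1⟩
    rw [hc] at this; exact absurd this (Finset.notMem_empty e)

lemma not_cross_inter {S W : Finset V} : ¬Crosses W (S ∩ W) := by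
  rw [not_crosses_iff]; exact Or.inr (Or.inl (Finset.inter_subset_right))

lemma not_cross_union {S W : Finset V} : ¬Crosses W (S ∪ W) := by
  rw [not_crosses_iff]; exact Or.inl (Finset.subset_union_right)

lemma not_cross_sdiff₁ {S W : Finset V} : ¬Crosses W (S \ W) := by
  rw [not_crosses_iff]
  refine Or.inr (Or.inr ?_)
  ext t; simp only [Finset.mem_inter, Finset.mem_sdiff, Finset.notMem_empty, iff_false]
  tauto

lemma not_cross_sdiff₂ {S W : Finset V} : ¬Crosses W (W \ S) := by
  rw [not_crosses_iff]; exact Or.inr (Or.inl (Finset.sdiff_subset))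

end Cross

lemma indR_le_one (P : Prop) : indR P ≤ 1 := by unfold indR; split <;> norm_num
lemma indR_xor (P Q : Prop) : indR (¬(P ↔ Q)) = indR P + indR Q - 2 * indR (P ∧ Q) := by
  by_cases hP : P <;> by_cases hQ : Q <;>
    simp [indR_of, indR_of_not, hP, hQ, iff_iff_implies_and_implies] <;> norm_num

variable (a b : ι → V) (x : ι → ℝ)

noncomputable def xde (S : Finset V) : ℝ := ∑ i ∈ cutEdges a b S, x i
noncomputable def cvF (S : Finset V) : ι → ℝ :=
  fun i => indR (i ∈ cutEdges a b S ∧ 0 < x i)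

lemma mem_cutEdges {i : ι} {T : Finset V} :
    i ∈ cutEdges a b T ↔ ¬((a i ∈ T) ↔ (b i ∈ T)) := by
  simp [cutEdges]

lemma xde_eq (T : Finset V) :
    xde a b x T = ∑ i : ι, x i * indR (i ∈ cutEdges a b T) := by
  rw [xde]
  rw [← Finset.sum_subset (Finset.subset_univ (cutEdges a b T))
      (fun i _ hi => by rw [indR_of_not _ hi, mul_zero])]
  exact Finset.sum_congr rfl (fun i hi => by rw [indR_of _ hi, mul_one])


lemma cvF_eq_of_pos {S : Finset V} {i : ι} (h : 0 < x i) :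
    cvF a b x S i = indR (i ∈ cutEdges a b S) := by
  unfold cvF
  by_cases hi : i ∈ cutEdges a b S
  · rw [indR_of _ ⟨hi, h⟩, indR_of _ hi]
  · rw [indR_of_not _ (fun hc => hi hc.1), indR_of_not _ hi]

lemma cvF_eq_zero {S : Finset V} {i : ι} (h : ¬ 0 < x i) :
    cvF a b x S i = 0 := indR_of_not _ (fun hc => h hc.2)

/-- Generic uncrossing half: if the per-edge indicator inequality holds and
`xde A + xde B ≤ xde C + xde D` fails appropriately, tightness propagates. -/
lemma uncross_half {f : Finset V → ℤ} (hx0 : ∀ i, 0 ≤ x i)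
    (hfeas : ∀ S : Finset V, (f S : ℝ) ≤ xde a b x S)
    {A B C D : Finset V}
    (hA : xde a b x A = f A) (hB : xde a b x B = f B)
    (hCD : f A + f B ≤ f C + f D)
    (hsub : ∀ i : ι, indR (i ∈ cutEdges a b C) + indR (i ∈ cutEdges a b D) ≤
      indR (i ∈ cutEdges a b A) + indR (i ∈ cutEdges a b B)) :
    xde a b x C = f C ∧ xde a b x D = f D ∧
      cvF a b x A + cvF a b x B = cvF a b x C + cvF a b x D := by
  have hsum : ∀ T, xde a b x T = ∑ i : ι, x i * indR (i ∈ cutEdges a b T) := xde_eq a b x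
  have hterm : ∀ i : ι, 0 ≤ x i * (indR (i ∈ cutEdges a b A) + indR (i ∈ cutEdges a b B)
      - indR (i ∈ cutEdges a b C) - indR (i ∈ cutEdges a b D)) := by
    intro i
    apply mul_nonneg (hx0 i)
    have := hsub i; linarith
  have hxCD : xde a b x C + xde a b x D ≤ xde a b x A + xde a b x B := by
    rw [hsum A, hsum B, hsum C, hsum D]
    rw [← Finset.sum_add_distrib, ← Finset.sum_add_distrib]
    apply Finset.sum_le_sum
    intro i _
    have := hsub i
    have h0 := hx0 i
    nlinarith [hsub i, hx0 i]
  have hCD' : (f A : ℝ) + f B ≤ (f C : ℝ) + f D := by exact_mod_cast hCD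
  have hCt : xde a b x C = f C := by
    have h1 := hfeas C; have h2 := hfeas D
    linarith [hA, hB]
  have hDt : xde a b x D = f D := by
    have h1 := hfeas C; have h2 := hfeas D
    linarith [hA, hB]
  refine ⟨hCt, hDt, ?_⟩
  -- the total slack sum is zero, hence each term is zero
  have hzero : ∑ i : ι, x i * (indR (i ∈ cutEdges a b A) + indR (i ∈ cutEdges a b B)
      - indR (i ∈ cutEdges a b C) - indR (i ∈ cutEdges a b D)) = 0 := by
    have : xde a b x A + xde a b x B = xde a b x C + xde a b x D := by
      have h1 := hfeas C; have h2 := hfeas D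
      linarith [hA, hB, hCt, hDt]
    rw [hsum A, hsum B, hsum C, hsum D] at this
    rw [show ∀ g1 g2 g3 g4 : ι → ℝ, ∑ i, x i * (g1 i + g2 i - g3 i - g4 i) =
      (∑ i, x i * g1 i + ∑ i, x i * g2 i) - (∑ i, x i * g3 i + ∑ i, x i * g4 i) from
      fun g1 g2 g3 g4 => by rw [← Finset.sum_add_distrib, ← Finset.sum_add_distrib,
        ← Finset.sum_sub_distrib]; apply Finset.sum_congr rfl; intros; ring]
    linarith [this]
  have heach := (Finset.sum_eq_zero_iff_of_nonneg (fun i _ => hterm i)).1 hzero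
  funext i
  by_cases hxi : 0 < x i
  · have hi := heach i (Finset.mem_univ i)
    have hco : indR (i ∈ cutEdges a b A) + indR (i ∈ cutEdges a b B)
        - indR (i ∈ cutEdges a b C) - indR (i ∈ cutEdges a b D) = 0 := by
      rcases mul_eq_zero.1 hi with h | h
      · exact absurd h (ne_of_gt hxi)
      · exact h
    simp only [Pi.add_apply]
    rw [cvF_eq_of_pos a b x hxi, cvF_eq_of_pos a b x hxi,
      cvF_eq_of_pos a b x hxi, cvF_eq_of_pos a b x hxi]
    linarith [hco]
  · simp only [Pi.add_apply]
    rw [cvF_eq_zero a b x hxi, cvF_eq_zero a b x hxi, cvF_eq_zero a b x hxi,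
      cvF_eq_zero a b x hxi]


lemma edge_submod' (pA pB qA qB : Prop) :
    indR (¬((pA ∧ pB) ↔ (qA ∧ qB))) + indR (¬((pA ∨ pB) ↔ (qA ∨ qB))) ≤
      indR (¬(pA ↔ qA)) + indR (¬(pB ↔ qB)) := by
  by_cases h1 : pA <;> by_cases h2 : pB <;> by_cases h3 : qA <;> by_cases h4 : qB <;>
    simp [indR_of, indR_of_not, h1, h2, h3, h4, iff_iff_implies_and_implies] <;> norm_num

lemma edge_posimod' (pA pB qA qB : Prop) :
    indR (¬((pA ∧ ¬pB) ↔ (qA ∧ ¬qB))) + indR (¬((pB ∧ ¬pA) ↔ (qB ∧ ¬qA))) ≤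
      indR (¬(pA ↔ qA)) + indR (¬(pB ↔ qB)) := by
  by_cases h1 : pA <;> by_cases h2 : pB <;> by_cases h3 : qA <;> by_cases h4 : qB <;>
    simp [indR_of, indR_of_not, h1, h2, h3, h4, iff_iff_implies_and_implies] <;> norm_num

lemma uncross {f : Finset V → ℤ} (hf : SkewSupermodular f) (hx0 : ∀ i, 0 ≤ x i)
    (hfeas : ∀ S : Finset V, (f S : ℝ) ≤ xde a b x S)
    {A B : Finset V} (hA : xde a b x A = f A) (hB : xde a b x B = f B) :
    (xde a b x (A ∩ B) = f (A ∩ B) ∧ xde a b x (A ∪ B) = f (A ∪ B) ∧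
      cvF a b x A + cvF a b x B = cvF a b x (A ∩ B) + cvF a b x (A ∪ B)) ∨
    (xde a b x (A \ B) = f (A \ B) ∧ xde a b x (B \ A) = f (B \ A) ∧
      cvF a b x A + cvF a b x B = cvF a b x (A \ B) + cvF a b x (B \ A)) := by
  rcases hf A B with hc | hc
  · left
    apply uncross_half a b x hx0 hfeas hA hB hc
    intro i
    have e1 : indR (i ∈ cutEdges a b (A ∩ B)) =
        indR (¬((a i ∈ A ∧ a i ∈ B) ↔ (b i ∈ A ∧ b i ∈ B))) :=
      indR_congr (by rw [mem_cutEdges]; simp [Finset.mem_inter])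
    have e2 : indR (i ∈ cutEdges a b (A ∪ B)) =
        indR (¬((a i ∈ A ∨ a i ∈ B) ↔ (b i ∈ A ∨ b i ∈ B))) :=
      indR_congr (by rw [mem_cutEdges]; simp [Finset.mem_union])
    have e3 : indR (i ∈ cutEdges a b A) = indR (¬(a i ∈ A ↔ b i ∈ A)) :=
      indR_congr (by rw [mem_cutEdges])
    have e4 : indR (i ∈ cutEdges a b B) = indR (¬(a i ∈ B ↔ b i ∈ B)) :=
      indR_congr (by rw [mem_cutEdges])
    rw [e1, e2, e3, e4]
    exact edge_submod' _ _ _ _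
  · right
    apply uncross_half a b x hx0 hfeas hA hB hc
    intro i
    have e1 : indR (i ∈ cutEdges a b (A \ B)) =
        indR (¬((a i ∈ A ∧ ¬ a i ∈ B) ↔ (b i ∈ A ∧ ¬ b i ∈ B))) :=
      indR_congr (by rw [mem_cutEdges]; simp [Finset.mem_sdiff])
    have e2 : indR (i ∈ cutEdges a b (B \ A)) =
        indR (¬((a i ∈ B ∧ ¬ a i ∈ A) ↔ (b i ∈ B ∧ ¬ b i ∈ A))) :=
      indR_congr (by rw [mem_cutEdges]; simp [Finset.mem_sdiff])
    have e3 : indR (i ∈ cutEdges a b A) = indR (¬(a i ∈ A ↔ b i ∈ A)) :=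
      indR_congr (by rw [mem_cutEdges])
    have e4 : indR (i ∈ cutEdges a b B) = indR (¬(a i ∈ B ↔ b i ∈ B)) :=
      indR_congr (by rw [mem_cutEdges])
    rw [e1, e2, e3, e4]
    exact edge_posimod' _ _ _ _


lemma span_top [DecidableEq ι] {f : Finset V → ℤ} {P : Set (ι → ℝ)}
    (hP : P = {y : ι → ℝ | (∀ i, 0 ≤ y i ∧ y i ≤ 1) ∧
      ∀ S : Finset V, (f S : ℝ) ≤ ∑ i ∈ cutEdges a b S, y i})
    (hx : x ∈ Set.extremePoints ℝ P) (hhalf : ∀ i, x i < 1/2) :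
    Submodule.span ℝ ({v : ι → ℝ | ∃ i, x i = 0 ∧ v = Pi.single i 1} ∪
      {v : ι → ℝ | ∃ S : Finset V, xde a b x S = f S ∧ v = cvF a b x S}) = ⊤ := by
  classical
  obtain ⟨hxP, hext⟩ := mem_extremePoints.1 hx
  rw [hP] at hxP
  obtain ⟨hbd, hfe⟩ := hxP
  by_contra hne
  have hlt : Submodule.span ℝ ({v : ι → ℝ | ∃ i, x i = 0 ∧ v = Pi.single i 1} ∪
      {v : ι → ℝ | ∃ S : Finset V, xde a b x S = f S ∧ v = cvF a b x S}) < ⊤ :=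
    lt_of_le_of_ne le_top hne
  obtain ⟨φ, hφne, hφmap⟩ := Submodule.exists_dual_map_eq_bot_of_lt_top hlt inferInstance
  have hker : ∀ v ∈ ({v : ι → ℝ | ∃ i, x i = 0 ∧ v = Pi.single i 1} ∪
      {v : ι → ℝ | ∃ S : Finset V, xde a b x S = f S ∧ v = cvF a b x S}), φ v = 0 := by
    intro v hv
    have : v ∈ Submodule.span ℝ ({v : ι → ℝ | ∃ i, x i = 0 ∧ v = Pi.single i 1} ∪
      {v : ι → ℝ | ∃ S : Finset V, xde a b x S = f S ∧ v = cvF a b x S}) :=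
      Submodule.subset_span hv
    have h2 : φ v ∈ Submodule.map φ (Submodule.span ℝ
      ({v : ι → ℝ | ∃ i, x i = 0 ∧ v = Pi.single i 1} ∪
      {v : ι → ℝ | ∃ S : Finset V, xde a b x S = f S ∧ v = cvF a b x S})) :=
      Submodule.mem_map_of_mem this
    rw [hφmap] at h2
    exact (Submodule.mem_bot ℝ).1 h2
  set d : ι → ℝ := fun i => φ (Pi.single i 1) with hd
  have hsingle : ∀ i : ι, (Pi.single i 1 : ι → ℝ) = fun j => if i = j then (1:ℝ) else 0 := by
    intro i
    funext j
    rw [Pi.single_apply]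
    by_cases h : i = j
    · simp [h]
    · rw [if_neg h, if_neg (fun hh => h hh.symm)]
  have hrepr : ∀ v : ι → ℝ, φ v = ∑ i : ι, v i * d i := by
    intro v
    conv_lhs => rw [pi_eq_sum_univ v]
    rw [map_sum]
    refine Finset.sum_congr rfl (fun i _ => ?_)
    rw [map_smul, smul_eq_mul]
    show v i * φ _ = v i * φ (Pi.single i 1)
    rw [hsingle i]
  have hd0 : ∀ i, x i = 0 → d i = 0 := by
    intro i hi
    exact hker _ (Or.inl ⟨i, hi, rfl⟩)
  have hdnz : d ≠ 0 := by
    intro h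
    apply hφne
    apply LinearMap.ext
    intro v
    rw [hrepr v, h]
    simp
  have hx0 : ∀ i, 0 ≤ x i := fun i => (hbd i).1
  -- tight constraint sums vanish
  have hcut : ∀ S : Finset V, xde a b x S = f S → ∑ i ∈ cutEdges a b S, d i = 0 := by
    intro S hS
    have h1 : φ (cvF a b x S) = 0 := hker _ (Or.inr ⟨S, hS, rfl⟩)
    rw [hrepr] at h1
    have h2 : ∑ i : ι, cvF a b x S i * d i = ∑ i ∈ cutEdges a b S, d i := by
      rw [← Finset.sum_subset (Finset.subset_univ (cutEdges a b S))
        (fun i _ hi => by rw [cvF]; rw [indR_of_not _ (fun hc => hi hc.1), zero_mul])]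
      apply Finset.sum_congr rfl
      intro i hi
      by_cases hxi : 0 < x i
      · rw [cvF, indR_of _ ⟨hi, hxi⟩, one_mul]
      · rw [cvF, indR_of_not _ (fun hc => hxi hc.2), zero_mul,
          hd0 i (le_antisymm (not_lt.1 hxi) (hx0 i))]
    rw [← h2]; exact h1
  -- bound on d-sums
  set M : ℝ := ∑ i : ι, |d i| with hM
  have hM0 : 0 ≤ M := Finset.sum_nonneg (fun i _ => abs_nonneg _)
  have hMb : ∀ s : Finset ι, |∑ i ∈ s, d i| ≤ M := by
    intro s
    calc |∑ i ∈ s, d i| ≤ ∑ i ∈ s, |d i| := Finset.abs_sum_le_sum_abs _ _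
    _ ≤ M := Finset.sum_le_sum_of_subset_of_nonneg (Finset.subset_univ s)
        (fun i _ _ => abs_nonneg _)
  have hMbi : ∀ i : ι, |d i| ≤ M := by
    intro i
    have := hMb {i}
    simpa using this
  -- choose epsilon
  set F : Finset ι := Finset.univ.filter (fun i => 0 < x i) with hF
  set NT : Finset (Finset V) := Finset.univ.filter (fun S => ¬ xde a b x S = f S) with hNT
  set c1 : ℝ := if h : F.Nonempty then F.inf' h (fun i => x i) else 1 with hc1
  set c2 : ℝ := if h : NT.Nonempty then NT.inf' h (fun S => xde a b x S - f S) else 1 with hc2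
  have hc1pos : 0 < c1 := by
    rw [hc1]
    split
    case isTrue h =>
      obtain ⟨i, hi, hieq⟩ := Finset.exists_mem_eq_inf' h (fun i => x i)
      rw [hieq]
      exact (Finset.mem_filter.1 hi).2
    case isFalse h => norm_num
  have hc1le : ∀ i, 0 < x i → c1 ≤ x i := by
    intro i hi
    have hiF : i ∈ F := Finset.mem_filter.2 ⟨Finset.mem_univ i, hi⟩
    rw [hc1]
    rw [dif_pos ⟨i, hiF⟩]
    exact Finset.inf'_le _ hiF
  have hc2pos : 0 < c2 := by
    rw [hc2]
    split
    case isTrue h =>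
      obtain ⟨S, hS, hSeq⟩ := Finset.exists_mem_eq_inf' h (fun S => xde a b x S - f S)
      rw [hSeq]
      have := (Finset.mem_filter.1 hS).2
      have h1 := hfe S
      have : (f S : ℝ) < xde a b x S := lt_of_le_of_ne h1 (fun hh => this hh.symm)
      linarith
    case isFalse h => norm_num
  have hc2le : ∀ S : Finset V, ¬ xde a b x S = f S → c2 ≤ xde a b x S - f S := by
    intro S hS
    have hSNT : S ∈ NT := Finset.mem_filter.2 ⟨Finset.mem_univ S, hS⟩
    rw [hc2, dif_pos ⟨S, hSNT⟩]
    exact Finset.inf'_le _ hSNT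
  set ε : ℝ := min c1 c2 / (M + 1) with hε
  have hεpos : 0 < ε := div_pos (lt_min hc1pos hc2pos) (by linarith)
  have hεM : ε * M ≤ min c1 c2 := by
    rw [hε]
    rw [div_mul_eq_mul_div, div_le_iff₀ (by linarith : (0:ℝ) < M + 1)]
    have : 0 < min c1 c2 := lt_min hc1pos hc2pos
    nlinarith
  -- the two perturbed points
  set y : ι → ℝ := fun i => x i + ε * d i with hy
  set z : ι → ℝ := fun i => x i - ε * d i with hz
  have hyd : ∀ i, |ε * d i| ≤ ε * M := by
    intro i
    rw [abs_mul, abs_of_pos hεpos]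
    exact mul_le_mul_of_nonneg_left (hMbi i) (le_of_lt hεpos)
  have hbds : ∀ i, (0 ≤ y i ∧ y i ≤ 1) ∧ (0 ≤ z i ∧ z i ≤ 1) := by
    intro i
    by_cases hxi : 0 < x i
    · have h1 : |ε * d i| ≤ x i := le_trans (hyd i) (le_trans hεM (le_trans (min_le_left _ _) (hc1le i hxi)))
      have h2 := hhalf i
      have h3 := abs_le.1 h1
      constructor <;> constructor <;> simp only [hy, hz] <;> try linarith
    · have := hd0 i (le_antisymm (not_lt.1 hxi) (hx0 i))
      have hxi0 : x i = 0 := le_antisymm (not_lt.1 hxi) (hx0 i)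
      simp only [hy, hz, this, hxi0]
      norm_num
  have hcons : ∀ S : Finset V, ((f S : ℝ) ≤ ∑ i ∈ cutEdges a b S, y i) ∧
      ((f S : ℝ) ≤ ∑ i ∈ cutEdges a b S, z i) := by
    intro S
    have hsplit : ∀ s : Finset ι, ∑ i ∈ s, y i = (∑ i ∈ s, x i) + ε * ∑ i ∈ s, d i := by
      intro s
      simp only [hy]
      rw [Finset.sum_add_distrib, Finset.mul_sum]
    have hsplit' : ∀ s : Finset ι, ∑ i ∈ s, z i = (∑ i ∈ s, x i) - ε * ∑ i ∈ s, d i := by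
      intro s
      simp only [hz]
      rw [Finset.sum_sub_distrib, Finset.mul_sum]
    by_cases hS : xde a b x S = f S
    · have h0 := hcut S hS
      rw [hsplit, hsplit', h0, mul_zero]
      have : ∑ i ∈ cutEdges a b S, x i = xde a b x S := rfl
      rw [this, hS]
      norm_num
    · have hsl := hc2le S hS
      have hb := hMb (cutEdges a b S)
      have hεS : |ε * ∑ i ∈ cutEdges a b S, d i| ≤ c2 := by
        rw [abs_mul, abs_of_pos hεpos]
        calc ε * |∑ i ∈ cutEdges a b S, d i| ≤ ε * M :=
          mul_le_mul_of_nonneg_left hb (le_of_lt hεpos)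
        _ ≤ min c1 c2 := hεM
        _ ≤ c2 := min_le_right _ _
      have h3 := abs_le.1 hεS
      have : ∑ i ∈ cutEdges a b S, x i = xde a b x S := rfl
      rw [hsplit, hsplit', this]
      constructor <;> linarith
  have hyP : y ∈ P := by rw [hP]; exact ⟨fun i => (hbds i).1, fun S => (hcons S).1⟩
  have hzP : z ∈ P := by rw [hP]; exact ⟨fun i => (hbds i).2, fun S => (hcons S).2⟩
  have hseg : x ∈ openSegment ℝ y z := by
    refine ⟨1/2, 1/2, by norm_num, by norm_num, by norm_num, ?_⟩
    funext i
    simp only [hy, hz, Pi.add_apply, Pi.smul_apply, smul_eq_mul]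
    ring
  have := (hext y hyP z hzP hseg).1
  apply hdnz
  funext i
  have : y i = x i := by rw [this]
  simp only [hy] at this
  have : ε * d i = 0 := by linarith
  rcases mul_eq_zero.1 this with h | h
  · exact absurd h (ne_of_gt hεpos)
  · exact h


def Indep (L : Finset (Finset V)) : Prop :=
  ∀ c : Finset V → ℝ, ∑ W ∈ L, c W • cvF a b x W = 0 → ∀ W ∈ L, c W = 0

lemma exists_laminar {f : Finset V → ℤ} (hf : SkewSupermodular f) (hx0 : ∀ i, 0 ≤ x i)
    (hfeas : ∀ S : Finset V, (f S : ℝ) ≤ xde a b x S) :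
    ∃ L : Finset (Finset V), (∀ S ∈ L, xde a b x S = f S) ∧
      (∀ A ∈ L, ∀ B ∈ L, ¬Crosses A B) ∧ Indep a b x L ∧
      (∀ S : Finset V, xde a b x S = f S →
        cvF a b x S ∈ Submodule.span ℝ (cvF a b x '' (L : Set (Finset V)))) := by
  classical
  set good : Finset (Finset V) → Prop := fun L =>
    (∀ S ∈ L, xde a b x S = f S) ∧ (∀ A ∈ L, ∀ B ∈ L, ¬Crosses A B) ∧ Indep a b x L
    with hgood
  set 𝒞 : Finset (Finset (Finset V)) := Finset.univ.filter good with h𝒞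
  have hemp : (∅ : Finset (Finset V)) ∈ 𝒞 := by
    rw [h𝒞, Finset.mem_filter]
    refine ⟨Finset.mem_univ _, ?_, ?_, ?_⟩
    · intro S hS; exact absurd hS (Finset.notMem_empty S)
    · intro A hA; exact absurd hA (Finset.notMem_empty A)
    · intro c _ W hW; exact absurd hW (Finset.notMem_empty W)
  obtain ⟨L, hL𝒞, hLmax⟩ := Finset.exists_max_image 𝒞 Finset.card ⟨∅, hemp⟩
  obtain ⟨hLtight, hLlam, hLind⟩ : good L := (Finset.mem_filter.1 hL𝒞).2
  refine ⟨L, hLtight, hLlam, hLind, ?_⟩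
  by_contra hbad
  push_neg at hbad
  set Bad : Finset (Finset V) := Finset.univ.filter (fun S =>
    xde a b x S = f S ∧ cvF a b x S ∉ Submodule.span ℝ (cvF a b x '' (L : Set (Finset V))))
    with hBad
  have hBadne : Bad.Nonempty := by
    obtain ⟨S, hS1, hS2⟩ := hbad
    exact ⟨S, Finset.mem_filter.2 ⟨Finset.mem_univ _, hS1, hS2⟩⟩
  set cn : Finset V → ℕ := fun S => (L.filter (fun W => Crosses W S)).card with hcn
  obtain ⟨S, hSBad, hSmin⟩ := Finset.exists_min_image Bad cn hBadne
  obtain ⟨hStight, hSspan⟩ : xde a b x S = f S ∧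
      cvF a b x S ∉ Submodule.span ℝ (cvF a b x '' (L : Set (Finset V))) :=
    (Finset.mem_filter.1 hSBad).2
  by_cases hzero : (L.filter (fun W => Crosses W S)) = ∅
  · -- no crossings: insert S into L, contradicting maximality
    have hnx : ∀ W ∈ L, ¬Crosses W S := by
      intro W hW hc
      have : W ∈ L.filter (fun W => Crosses W S) := Finset.mem_filter.2 ⟨hW, hc⟩
      rw [hzero] at this; exact absurd this (Finset.notMem_empty W)
    have hSnotL : S ∉ L := by
      intro h
      exact hSspan (Submodule.subset_span ⟨S, h, rfl⟩)
    have hins : (insert S L) ∈ 𝒞 := by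
      rw [h𝒞, Finset.mem_filter]
      refine ⟨Finset.mem_univ _, ?_, ?_, ?_⟩
      · intro T hT
        rcases Finset.mem_insert.1 hT with h | h
        · rw [h]; exact hStight
        · exact hLtight T h
      · intro A hA B hB
        rcases Finset.mem_insert.1 hA with hA' | hA' <;>
          rcases Finset.mem_insert.1 hB with hB' | hB'
        · subst hA'; subst hB'
          intro hc; exact hc.2.1 (le_refl _)
        · subst hA'
          intro hc; exact hnx B hB' (crosses_symm hc)
        · subst hB'
          exact hnx A hA'
        · exact hLlam A hA' B hB'
      · intro c hsum W hW
        rw [Finset.sum_insert hSnotL] at hsum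
        have hcS : c S = 0 := by
          by_contra hcS
          apply hSspan
          have h1 : c S • cvF a b x S = -(∑ W ∈ L, c W • cvF a b x W) :=
            eq_neg_of_add_eq_zero_left hsum
          have hvS : cvF a b x S = (-(c S)⁻¹) • ∑ W ∈ L, c W • cvF a b x W := by
            have h2 : cvF a b x S = (c S)⁻¹ • (c S • cvF a b x S) := by
              rw [← smul_assoc, smul_eq_mul, inv_mul_cancel₀ hcS, one_smul]
            rw [h2, h1, smul_neg, ← neg_smul]
          rw [hvS]
          apply Submodule.smul_mem
          apply Submodule.sum_smul_mem
          intro W hW'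
          exact Submodule.subset_span ⟨W, hW', rfl⟩
        rcases Finset.mem_insert.1 hW with h | h
        · rw [h]; exact hcS
        · rw [hcS, zero_smul, zero_add] at hsum
          exact hLind c hsum W h
    have hcard : L.card < (insert S L).card := by
      rw [Finset.card_insert_of_notMem hSnotL]; omega
    exact absurd (hLmax _ hins) (not_le.2 hcard)
  · -- there is a crossing W ∈ L
    obtain ⟨W, hWmem⟩ := Finset.nonempty_iff_ne_empty.2 hzero
    have hWL : W ∈ L := (Finset.mem_filter.1 hWmem).1
    have hWS : Crosses W S := (Finset.mem_filter.1 hWmem).2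
    have hSW : Crosses S W := crosses_symm hWS
    have hWtight : xde a b x W = f W := hLtight W hWL
    have hvW : cvF a b x W ∈ Submodule.span ℝ (cvF a b x '' (L : Set (Finset V))) :=
      Submodule.subset_span ⟨W, hWL, rfl⟩
    -- generic step for the uncrossed pair (C, D)
    have step : ∀ C D : Finset V,
        xde a b x C = f C → xde a b x D = f D →
        cvF a b x S + cvF a b x W = cvF a b x C + cvF a b x D →
        (¬Crosses W C) → (¬Crosses W D) →
        (∀ W' ∈ L, ¬Crosses W' W → Crosses W' C → Crosses W' S) →
        (∀ W' ∈ L, ¬Crosses W' W → Crosses W' D → Crosses W' S) → False := by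
      intro C D hCt hDt hvsum hWC hWD hCl hDl
      have hone : cvF a b x C ∉ Submodule.span ℝ (cvF a b x '' (L : Set (Finset V))) ∨
          cvF a b x D ∉ Submodule.span ℝ (cvF a b x '' (L : Set (Finset V))) := by
        by_contra hc
        push_neg at hc
        apply hSspan
        have : cvF a b x S = cvF a b x C + cvF a b x D - cvF a b x W := by
          rw [← hvsum]; abel
        rw [this]
        exact Submodule.sub_mem _ (Submodule.add_mem _ hc.1 hc.2) hvW
      -- pick the bad one
      have key : ∀ C' : Finset V, xde a b x C' = f C' →
          cvF a b x C' ∉ Submodule.span ℝ (cvF a b x '' (L : Set (Finset V))) →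
          (¬Crosses W C') →
          (∀ W' ∈ L, ¬Crosses W' W → Crosses W' C' → Crosses W' S) → False := by
        intro C' hC't hC'span hWC' hC'l
        have hC'Bad : C' ∈ Bad := Finset.mem_filter.2 ⟨Finset.mem_univ _, hC't, hC'span⟩
        have hsubset : L.filter (fun W' => Crosses W' C') ⊆
            (L.filter (fun W' => Crosses W' S)).erase W := by
          intro W' hW'
          obtain ⟨hW'L, hW'C⟩ := Finset.mem_filter.1 hW'
          have hW'ne : W' ≠ W := by
            intro h; subst h; exact hWC' hW'C
          refine Finset.mem_erase.2 ⟨hW'ne, Finset.mem_filter.2 ⟨hW'L, ?_⟩⟩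
          have hW'W : ¬Crosses W' W := hLlam W' hW'L W hWL
          exact hC'l W' hW'L hW'W hW'C
        have hlt : cn C' < cn S := by
          have h1 : (L.filter (fun W' => Crosses W' C')).card ≤
              ((L.filter (fun W' => Crosses W' S)).erase W).card :=
            Finset.card_le_card hsubset
          have h2 : ((L.filter (fun W' => Crosses W' S)).erase W).card <
              (L.filter (fun W' => Crosses W' S)).card :=
            Finset.card_erase_lt_of_mem hWmem
          exact lt_of_le_of_lt h1 h2
        exact absurd (hSmin C' hC'Bad) (not_le.2 hlt)
      rcases hone with h | h
      · exact key C hCt h hWC (fun W' a_1 a_2 a_3 => hCl W' a_1 a_2 a_3)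
      · exact key D hDt h hWD (fun W' a_1 a_2 a_3 => hDl W' a_1 a_2 a_3)
    rcases uncross a b x hf hx0 hfeas hStight hWtight with ⟨hCt, hDt, hvsum⟩ | ⟨hCt, hDt, hvsum⟩
    · exact step (S ∩ W) (S ∪ W) hCt hDt hvsum
        not_cross_inter
        not_cross_union
        (fun W' _ h1 h2 => cross_inter h1 h2)
        (fun W' _ h1 h2 => cross_union hSW h1 h2)
    · exact step (S \ W) (W \ S) hCt hDt hvsum
        not_cross_sdiff₁ not_cross_sdiff₂
        (fun W' _ h1 h2 => cross_sdiff₁ hSW h1 h2)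
        (fun W' _ h1 h2 => cross_sdiff₂ hSW h1 h2)


lemma card_F_le [DecidableEq ι] {f : Finset V → ℤ} (hx0 : ∀ i, 0 ≤ x i)
    {L : Finset (Finset V)}
    (hspan : Submodule.span ℝ ({v : ι → ℝ | ∃ i, x i = 0 ∧ v = Pi.single i 1} ∪
      {v : ι → ℝ | ∃ S : Finset V, xde a b x S = f S ∧ v = cvF a b x S}) = ⊤)
    (hLspan : ∀ S : Finset V, xde a b x S = f S →
      cvF a b x S ∈ Submodule.span ℝ (cvF a b x '' (L : Set (Finset V)))) :
    (Finset.univ.filter (fun i => 0 < x i)).card ≤ L.card := by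
  classical
  set U : Submodule ℝ (ι → ℝ) := Submodule.span ℝ (cvF a b x '' (L : Set (Finset V))) with hU
  set Z : Finset ι := Finset.univ.filter (fun i => x i = 0) with hZ
  set U0 : Submodule ℝ (ι → ℝ) :=
    Submodule.span ℝ ((Z.image (fun i => (Pi.single i 1 : ι → ℝ))) : Set (ι → ℝ)) with hU0
  have hsub1 : {v : ι → ℝ | ∃ i, x i = 0 ∧ v = Pi.single i 1} ⊆ (U0 : Set (ι → ℝ)) := by
    rintro v ⟨i, hi, rfl⟩
    apply Submodule.subset_span
    rw [Finset.coe_image]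
    exact ⟨i, by simp [hZ, hi], rfl⟩
  have hsub2 : {v : ι → ℝ | ∃ S : Finset V, xde a b x S = f S ∧ v = cvF a b x S} ⊆
      (U : Set (ι → ℝ)) := by
    rintro v ⟨S, hS, rfl⟩
    exact hLspan S hS
  have htop : U0 ⊔ U = ⊤ := by
    rw [eq_top_iff, ← hspan]
    rw [Submodule.span_le]
    rintro v (hv | hv)
    · exact Submodule.mem_sup_left (hsub1 hv)
    · exact Submodule.mem_sup_right (hsub2 hv)
  have h1 : Module.finrank ℝ (U0 ⊔ U : Submodule ℝ (ι → ℝ)) ≤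
      Module.finrank ℝ U0 + Module.finrank ℝ U :=
    Submodule.finrank_add_le_finrank_add_finrank U0 U
  rw [htop] at h1
  have h2 : Module.finrank ℝ (⊤ : Submodule ℝ (ι → ℝ)) = Fintype.card ι := by
    rw [finrank_top, Module.finrank_pi]
  have h3 : Module.finrank ℝ U0 ≤ Z.card := by
    calc Module.finrank ℝ U0 ≤ (Z.image (fun i => (Pi.single i 1 : ι → ℝ))).card :=
      finrank_span_finset_le_card _
    _ ≤ Z.card := Finset.card_image_le
  have h4 : Module.finrank ℝ U ≤ L.card := by
    have : cvF a b x '' (L : Set (Finset V)) = ((L.image (cvF a b x)) : Set (ι → ℝ)) := by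
      rw [Finset.coe_image]
    rw [hU, this]
    calc Module.finrank ℝ (Submodule.span ℝ ((L.image (cvF a b x)) : Set (ι → ℝ)))
        ≤ (L.image (cvF a b x)).card := finrank_span_finset_le_card _
    _ ≤ L.card := Finset.card_image_le
  have h5 : Z.card + (Finset.univ.filter (fun i => 0 < x i)).card = Fintype.card ι := by
    rw [hZ]
    have : ∀ i : ι, x i = 0 ↔ ¬ 0 < x i := by
      intro i
      constructor
      · intro h; rw [h]; exact lt_irrefl 0
      · intro h; exact le_antisymm (not_lt.1 h) (hx0 i)
    rw [Finset.filter_congr (fun i _ => this i)]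
    rw [Finset.filter_not]
    have := Finset.card_sdiff_add_card_eq_card
      (Finset.filter_subset (fun i => 0 < x i) (Finset.univ : Finset ι))
    rw [this]
    exact Finset.card_univ
  omega


section Tokens
variable (L : Finset (Finset V))

def MinV (u : V) (S : Finset V) : Prop := S ∈ L ∧ u ∈ S ∧ ∀ W ∈ L, u ∈ W → S ⊆ W

def MinE (i : ι) (S : Finset V) : Prop :=
  S ∈ L ∧ a i ∈ S ∧ b i ∈ S ∧ ∀ W ∈ L, a i ∈ W → b i ∈ W → S ⊆ W

def children (S : Finset V) : Finset (Finset V) :=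
  L.filter (fun R => R ⊂ S ∧ ∀ W ∈ L, R ⊂ W → ¬ W ⊂ S)

variable {L}

lemma minV_unique {u : V} {S S' : Finset V} (h : MinV L u S) (h' : MinV L u S') : S = S' :=
  Finset.Subset.antisymm (h.2.2 S' h'.1 h'.2.1) (h'.2.2 S h.1 h.2.1)

lemma minE_unique {i : ι} {S S' : Finset V} (h : MinE a b L i S) (h' : MinE a b L i S') :
    S = S' :=
  Finset.Subset.antisymm (h.2.2.2 S' h'.1 h'.2.1 h'.2.2.1) (h'.2.2.2 S h.1 h.2.1 h.2.2.1)

lemma minV_exists (hlam : ∀ A ∈ L, ∀ B ∈ L, ¬Crosses A B) {u : V} {W0 : Finset V}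
    (hW0 : W0 ∈ L) (hu : u ∈ W0) : ∃ S, MinV L u S := by
  classical
  have hne : (L.filter (fun W => u ∈ W)).Nonempty := ⟨W0, Finset.mem_filter.2 ⟨hW0, hu⟩⟩
  obtain ⟨S, hS, hSmin⟩ := Finset.exists_min_image _ Finset.card hne
  obtain ⟨hSL, hSu⟩ := Finset.mem_filter.1 hS
  refine ⟨S, hSL, hSu, ?_⟩
  intro W hW huW
  have hWf : W ∈ L.filter (fun W => u ∈ W) := Finset.mem_filter.2 ⟨hW, huW⟩
  have hcard := hSmin W hWf
  have hnc := hlam S hSL W hW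
  rw [not_crosses_iff] at hnc
  rcases hnc with h | h | h
  · exact h
  · rw [Finset.eq_of_subset_of_card_le h hcard]
  · exfalso
    have : u ∈ S ∩ W := Finset.mem_inter.2 ⟨hSu, huW⟩
    rw [h] at this; exact absurd this (Finset.notMem_empty u)

lemma minE_exists (hlam : ∀ A ∈ L, ∀ B ∈ L, ¬Crosses A B) {i : ι} {W0 : Finset V}
    (hW0 : W0 ∈ L) (ha : a i ∈ W0) (hb : b i ∈ W0) : ∃ S, MinE a b L i S := by
  classical
  have hne : (L.filter (fun W => a i ∈ W ∧ b i ∈ W)).Nonempty :=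
    ⟨W0, Finset.mem_filter.2 ⟨hW0, ha, hb⟩⟩
  obtain ⟨S, hS, hSmin⟩ := Finset.exists_min_image _ Finset.card hne
  obtain ⟨hSL, hSu⟩ := Finset.mem_filter.1 hS
  refine ⟨S, hSL, hSu.1, hSu.2, ?_⟩
  intro W hW haW hbW
  have hWf : W ∈ L.filter (fun W => a i ∈ W ∧ b i ∈ W) :=
    Finset.mem_filter.2 ⟨hW, haW, hbW⟩
  have hcard := hSmin W hWf
  have hnc := hlam S hSL W hW
  rw [not_crosses_iff] at hnc
  rcases hnc with h | h | h
  · exact h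
  · rw [Finset.eq_of_subset_of_card_le h hcard]
  · exfalso
    have : a i ∈ S ∩ W := Finset.mem_inter.2 ⟨hSu.1, haW⟩
    rw [h] at this; exact absurd this (Finset.notMem_empty (a i))

lemma children_mem {S R : Finset V} (h : R ∈ children L S) : R ∈ L ∧ R ⊂ S :=
  ⟨(Finset.mem_filter.1 h).1, (Finset.mem_filter.1 h).2.1⟩

lemma children_disj (hlam : ∀ A ∈ L, ∀ B ∈ L, ¬Crosses A B) {S R R' : Finset V}
    (hR : R ∈ children L S) (hR' : R' ∈ children L S) (hne : R ≠ R') : R ∩ R' = ∅ := by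
  obtain ⟨hRL, hRs, hRmax⟩ := Finset.mem_filter.1 hR
  obtain ⟨hR'L, hR's, _⟩ := Finset.mem_filter.1 hR'
  have hnc := hlam R hRL R' hR'L
  rw [not_crosses_iff] at hnc
  rcases hnc with h | h | h
  · exact absurd hR's ((hRmax R' hR'L (Finset.ssubset_iff_subset_ne.2 ⟨h, hne⟩)))
  · exact absurd hRs ((Finset.mem_filter.1 hR').2.2 R hRL
      (Finset.ssubset_iff_subset_ne.2 ⟨h, hne.symm⟩))
  · exact h

lemma child_above (hlam : ∀ A ∈ L, ∀ B ∈ L, ¬Crosses A B) {S W : Finset V}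
    (hW : W ∈ L) (hWS : W ⊂ S) : ∃ R ∈ children L S, W ⊆ R := by
  classical
  have hne : (L.filter (fun R => W ⊆ R ∧ R ⊂ S)).Nonempty :=
    ⟨W, Finset.mem_filter.2 ⟨hW, Finset.Subset.refl W, hWS⟩⟩
  obtain ⟨R, hR, hRmax⟩ := Finset.exists_max_image _ Finset.card hne
  obtain ⟨hRL, hWR, hRS⟩ := Finset.mem_filter.1 hR
  refine ⟨R, Finset.mem_filter.2 ⟨hRL, hRS, ?_⟩, hWR⟩
  · intro W' hW'L hRW' hW'S
    have : W' ∈ L.filter (fun R => W ⊆ R ∧ R ⊂ S) :=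
      Finset.mem_filter.2 ⟨hW'L, le_trans hWR (le_of_lt hRW'), hW'S⟩
    have hcard := hRmax W' this
    have := Finset.card_lt_card hRW'
    omega

lemma minV_iff (hlam : ∀ A ∈ L, ∀ B ∈ L, ¬Crosses A B) {S : Finset V} (hS : S ∈ L) (u : V) :
    MinV L u S ↔ u ∈ S ∧ ¬ ∃ R ∈ children L S, u ∈ R := by
  constructor
  · rintro ⟨_, huS, hmin⟩
    refine ⟨huS, ?_⟩
    rintro ⟨R, hR, huR⟩
    obtain ⟨hRL, hRS⟩ := children_mem hR
    exact (Finset.ssubset_iff_subset_ne.1 hRS).2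
      (Finset.Subset.antisymm (le_of_lt hRS) (hmin R hRL huR))
  · rintro ⟨huS, hnc⟩
    refine ⟨hS, huS, ?_⟩
    intro W hWL huW
    have h := hlam S hS W hWL
    rw [not_crosses_iff] at h
    rcases h with h | h | h
    · exact h
    · rcases eq_or_ne W S with rfl | hne
      · exact Finset.Subset.refl W
      · exfalso
        obtain ⟨R, hR, hWR⟩ := child_above hlam hWL (Finset.ssubset_iff_subset_ne.2 ⟨h, hne⟩)
        exact hnc ⟨R, hR, hWR huW⟩
    · exfalso
      have : u ∈ S ∩ W := Finset.mem_inter.2 ⟨huS, huW⟩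
      rw [h] at this; exact absurd this (Finset.notMem_empty u)

lemma minE_iff (hlam : ∀ A ∈ L, ∀ B ∈ L, ¬Crosses A B) {S : Finset V} (hS : S ∈ L) (i : ι) :
    MinE a b L i S ↔ (a i ∈ S ∧ b i ∈ S) ∧ ¬ ∃ R ∈ children L S, a i ∈ R ∧ b i ∈ R := by
  constructor
  · rintro ⟨_, haS, hbS, hmin⟩
    refine ⟨⟨haS, hbS⟩, ?_⟩
    rintro ⟨R, hR, haR, hbR⟩
    obtain ⟨hRL, hRS⟩ := children_mem hR
    exact (Finset.ssubset_iff_subset_ne.1 hRS).2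
      (Finset.Subset.antisymm (le_of_lt hRS) (hmin R hRL haR hbR))
  · rintro ⟨⟨haS, hbS⟩, hnc⟩
    refine ⟨hS, haS, hbS, ?_⟩
    intro W hWL haW hbW
    have h := hlam S hS W hWL
    rw [not_crosses_iff] at h
    rcases h with h | h | h
    · exact h
    · rcases eq_or_ne W S with rfl | hne
      · exact Finset.Subset.refl W
      · exfalso
        obtain ⟨R, hR, hWR⟩ := child_above hlam hWL (Finset.ssubset_iff_subset_ne.2 ⟨h, hne⟩)
        exact hnc ⟨R, hR, hWR haW, hWR hbW⟩
    · exfalso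
      have : a i ∈ S ∩ W := Finset.mem_inter.2 ⟨haS, haW⟩
      rw [h] at this; exact absurd this (Finset.notMem_empty (a i))

lemma sum_indR {α : Type*} [DecidableEq α] (t : Finset α) (p : α → Prop)
    (huniq : ∀ R ∈ t, ∀ R' ∈ t, p R → p R' → R = R') :
    ∑ R ∈ t, indR (p R) = indR (∃ R ∈ t, p R) := by
  by_cases h : ∃ R ∈ t, p R
  · obtain ⟨R0, hR0, hp0⟩ := h
    rw [indR_of _ ⟨R0, hR0, hp0⟩]
    rw [Finset.sum_eq_single R0]
    · exact indR_of _ hp0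
    · intro R hR hne
      exact indR_of_not _ (fun hp => hne (huniq R hR R0 hR0 hp hp0))
    · intro h; exact absurd hR0 h
  · rw [indR_of_not _ h]
    apply Finset.sum_eq_zero
    intro R hR
    exact indR_of_not _ (fun hp => h ⟨R, hR, hp⟩)

lemma sum_indR_card {α : Type*} (t : Finset α) (p : α → Prop) :
    ∑ i ∈ t, indR (p i) = ((t.filter (fun i => @ite _ (p i) (Classical.dec _) True False)).card : ℝ) := by
  classical
  rw [← Finset.sum_boole]
  apply Finset.sum_congr rfl
  intro i _
  by_cases h : p i
  · rw [indR_of _ h, if_pos (by simp [h])]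
  · rw [indR_of_not _ h, if_neg (by simp [h])]

lemma ind_identity (A B ru rv sm : Prop) (h1 : ru → A) (h2 : rv → B) (h3 : sm → ru)
    (h4 : sm → rv) :
    indR (A ∧ ¬ru) + indR (B ∧ ¬rv) - 2 * indR ((A ∧ B) ∧ ¬sm) =
      (indR A + indR B - 2 * indR (A ∧ B)) - (indR ru + indR rv - 2 * indR sm) := by
  by_cases hA : A <;> by_cases hB : B <;> by_cases hru : ru <;> by_cases hrv : rv <;>
    by_cases hsm : sm <;>
    first
      | (exact absurd (h1 ‹ru›) ‹¬A›)
      | (exact absurd (h2 ‹rv›) ‹¬B›)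
      | (exact absurd (h3 ‹sm›) ‹¬ru›)
      | (exact absurd (h4 ‹sm›) ‹¬rv›)
      | (simp [indR_of, indR_of_not, hA, hB, hru, hrv, hsm]; try ring)

end Tokens


lemma mem_cut_split {T : Finset V} {i : ι} :
    indR (i ∈ cutEdges a b T) =
      indR (a i ∈ T) + indR (b i ∈ T) - 2 * indR (a i ∈ T ∧ b i ∈ T) := by
  rw [indR_congr (mem_cutEdges a b), indR_xor]

lemma xde_F {T : Finset V} (hx0 : ∀ i, 0 ≤ x i) :
    ∑ i ∈ Finset.univ.filter (fun i => 0 < x i), x i * indR (i ∈ cutEdges a b T) =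
      xde a b x T := by
  rw [xde_eq]
  apply Finset.sum_subset (Finset.filter_subset _ _)
  intro i _ hi
  simp only [Finset.mem_filter, Finset.mem_univ, true_and] at hi
  rw [le_antisymm (not_lt.1 hi) (hx0 i), zero_mul]

lemma card_L_lt {f : Finset V → ℤ} (hx0 : ∀ i, 0 ≤ x i) (hhalf : ∀ i, x i < 1/2)
    {L : Finset (Finset V)} (htight : ∀ S ∈ L, xde a b x S = f S)
    (hlam : ∀ A ∈ L, ∀ B ∈ L, ¬Crosses A B) (hind : Indep a b x L)
    (hLne : L.Nonempty) :
    L.card < (Finset.univ.filter (fun i => 0 < x i)).card := by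
  classical
  set F : Finset ι := Finset.univ.filter (fun i => 0 < x i) with hF
  set tok : ι → Finset V → ℝ := fun i S =>
    indR (MinV L (a i) S) * x i + indR (MinV L (b i) S) * x i +
      indR (MinE a b L i S) * (1 - 2 * x i) with htok
  set T : Finset V → ℝ := fun S => ∑ i ∈ F, tok i S with hT
  have hxF : ∀ i ∈ F, 0 < x i := fun i hi => (Finset.mem_filter.1 hi).2
  have h2xF : ∀ i, 0 < 1 - 2 * x i := fun i => by have := hhalf i; linarith
  -- the per-edge identity
  have hiden : ∀ S ∈ L, ∀ i : ι,
      indR (MinV L (a i) S) + indR (MinV L (b i) S) - 2 * indR (MinE a b L i S) =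
        indR (i ∈ cutEdges a b S) -
          ∑ R ∈ children L S, indR (i ∈ cutEdges a b R) := by
    intro S hS i
    have huniq1 : ∀ R ∈ children L S, ∀ R' ∈ children L S, a i ∈ R → a i ∈ R' → R = R' := by
      intro R hR R' hR' h h'
      by_contra hne
      have := children_disj hlam hR hR' hne
      have : a i ∈ R ∩ R' := Finset.mem_inter.2 ⟨h, h'⟩
      rw [children_disj hlam hR hR' hne] at this
      exact absurd this (Finset.notMem_empty _)
    have huniq2 : ∀ R ∈ children L S, ∀ R' ∈ children L S, b i ∈ R → b i ∈ R' → R = R' := by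
      intro R hR R' hR' h h'
      by_contra hne
      have : b i ∈ R ∩ R' := Finset.mem_inter.2 ⟨h, h'⟩
      rw [children_disj hlam hR hR' hne] at this
      exact absurd this (Finset.notMem_empty _)
    have huniq3 : ∀ R ∈ children L S, ∀ R' ∈ children L S,
        (a i ∈ R ∧ b i ∈ R) → (a i ∈ R' ∧ b i ∈ R') → R = R' := by
      intro R hR R' hR' h h'
      exact huniq1 R hR R' hR' h.1 h'.1
    have hsplit : ∑ R ∈ children L S, indR (i ∈ cutEdges a b R) =
        (∑ R ∈ children L S, indR (a i ∈ R)) + (∑ R ∈ children L S, indR (b i ∈ R)) -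
          2 * ∑ R ∈ children L S, indR (a i ∈ R ∧ b i ∈ R) := by
      have hpt : ∀ R ∈ children L S, indR (i ∈ cutEdges a b R) =
          indR (a i ∈ R) + indR (b i ∈ R) - 2 * indR (a i ∈ R ∧ b i ∈ R) :=
        fun R _ => mem_cut_split a b
      rw [Finset.sum_congr rfl hpt, Finset.sum_sub_distrib, Finset.sum_add_distrib,
        ← Finset.mul_sum]
    rw [hsplit, mem_cut_split,
      sum_indR _ _ huniq1, sum_indR _ _ huniq2, sum_indR _ _ huniq3,
      indR_congr (minV_iff hlam hS (a i)), indR_congr (minV_iff hlam hS (b i)),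
      indR_congr (minE_iff a b hlam hS i)]
    have e1 : indR (a i ∈ S ∧ ¬∃ R ∈ children L S, a i ∈ R) =
        indR (a i ∈ S ∧ ¬∃ R ∈ children L S, a i ∈ R) := rfl
    apply ind_identity
    · rintro ⟨R, hR, h⟩; exact (le_of_lt (children_mem hR).2) h
    · rintro ⟨R, hR, h⟩; exact (le_of_lt (children_mem hR).2) h
    · rintro ⟨R, hR, h⟩; exact ⟨R, hR, h.1⟩
    · rintro ⟨R, hR, h⟩; exact ⟨R, hR, h.2⟩
  -- T S as an integer
  have hTeq : ∀ S ∈ L, T S = ((F.filter (fun i =>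
        @ite _ (MinE a b L i S) (Classical.dec _) True False)).card : ℝ) +
        (xde a b x S - ∑ R ∈ children L S, xde a b x R) := by
    intro S hS
    have h1 : T S = (∑ i ∈ F, x i * (indR (MinV L (a i) S) + indR (MinV L (b i) S) -
        2 * indR (MinE a b L i S))) + ∑ i ∈ F, indR (MinE a b L i S) := by
      rw [hT, ← Finset.sum_add_distrib]
      apply Finset.sum_congr rfl
      intro i _
      rw [htok]
      ring
    rw [h1]
    have h2 : ∑ i ∈ F, x i * (indR (MinV L (a i) S) + indR (MinV L (b i) S) -
        2 * indR (MinE a b L i S)) =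
        xde a b x S - ∑ R ∈ children L S, xde a b x R := by
      calc ∑ i ∈ F, x i * (indR (MinV L (a i) S) + indR (MinV L (b i) S) -
          2 * indR (MinE a b L i S))
          = ∑ i ∈ F, (x i * indR (i ∈ cutEdges a b S) -
            ∑ R ∈ children L S, x i * indR (i ∈ cutEdges a b R)) := by
            apply Finset.sum_congr rfl
            intro i _
            rw [hiden S hS i, mul_sub, Finset.mul_sum]
        _ = (∑ i ∈ F, x i * indR (i ∈ cutEdges a b S)) -
            ∑ i ∈ F, ∑ R ∈ children L S, x i * indR (i ∈ cutEdges a b R) :=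
            Finset.sum_sub_distrib _ _
        _ = xde a b x S - ∑ R ∈ children L S, ∑ i ∈ F, x i * indR (i ∈ cutEdges a b R) := by
            rw [xde_F a b x hx0, Finset.sum_comm]
        _ = xde a b x S - ∑ R ∈ children L S, xde a b x R := by
            congr 1
            apply Finset.sum_congr rfl
            intro R _
            exact xde_F a b x hx0
    rw [h2, sum_indR_card]
    ring
  -- each T S is at least 1
  have hT1 : ∀ S ∈ L, (1:ℝ) ≤ T S := by
    intro S hS
    have htoknn : ∀ i ∈ F, 0 ≤ tok i S := by
      intro i hi
      rw [htok]
      have := hxF i hi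
      have := h2xF i
      have n1 := indR_nonneg (MinV L (a i) S)
      have n2 := indR_nonneg (MinV L (b i) S)
      have n3 := indR_nonneg (MinE a b L i S)
      positivity
    have hTpos : 0 < T S := by
      rcases lt_or_ge 0 (T S) with h | h
      · exact h
      exfalso
      have hT0 : T S = 0 := le_antisymm h (Finset.sum_nonneg htoknn)
      have htok0 := (Finset.sum_eq_zero_iff_of_nonneg htoknn).1 hT0
      -- each token is zero: derive that cvF S is the sum of children's cvF
      have hkey : ∀ i ∈ F, indR (i ∈ cutEdges a b S) =
          ∑ R ∈ children L S, indR (i ∈ cutEdges a b R) := by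
        intro i hi
        have h0 : indR (MinV L (a i) S) * x i + indR (MinV L (b i) S) * x i +
            indR (MinE a b L i S) * (1 - 2 * x i) = 0 := htok0 i hi
        have hx := hxF i hi
        have h2x := h2xF i
        have n1 := indR_nonneg (MinV L (a i) S)
        have n2 := indR_nonneg (MinV L (b i) S)
        have n3 := indR_nonneg (MinE a b L i S)
        have p1 : 0 ≤ indR (MinV L (a i) S) * x i := mul_nonneg n1 hx.le
        have p2 : 0 ≤ indR (MinV L (b i) S) * x i := mul_nonneg n2 hx.le
        have p3 : 0 ≤ indR (MinE a b L i S) * (1 - 2 * x i) := mul_nonneg n3 h2x.le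
        have q1 : indR (MinV L (a i) S) * x i = 0 := by linarith
        have q2 : indR (MinV L (b i) S) * x i = 0 := by linarith
        have q3 : indR (MinE a b L i S) * (1 - 2 * x i) = 0 := by linarith
        have z1 : indR (MinV L (a i) S) = 0 := by
          rcases mul_eq_zero.1 q1 with h | h
          · exact h
          · exact absurd h (ne_of_gt hx)
        have z2 : indR (MinV L (b i) S) = 0 := by
          rcases mul_eq_zero.1 q2 with h | h
          · exact h
          · exact absurd h (ne_of_gt hx)
        have z3 : indR (MinE a b L i S) = 0 := by
          rcases mul_eq_zero.1 q3 with h | h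
          · exact h
          · exact absurd h (ne_of_gt h2x)
        have := hiden S hS i
        rw [z1, z2, z3] at this
        linarith [this]
      set c : Finset V → ℝ := fun W =>
        if W = S then 1 else if W ∈ children L S then -1 else 0 with hc
      have hchsub : children L S ⊆ L.erase S := by
        intro R hR
        refine Finset.mem_erase.2 ⟨?_, (children_mem hR).1⟩
        exact (children_mem hR).2.ne
      have hsum : ∑ W ∈ L, c W • cvF a b x W = 0 := by
        rw [← Finset.add_sum_erase L _ hS]
        have hcS : c S = 1 := by rw [hc]; simp
        have hrest : ∑ W ∈ L.erase S, c W • cvF a b x W =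
            ∑ R ∈ children L S, (-1 : ℝ) • cvF a b x R := by
          rw [← Finset.sum_subset hchsub]
          · apply Finset.sum_congr rfl
            intro R hR
            have hne : R ≠ S := (children_mem hR).2.ne
            rw [hc]; simp [hne, hR]
          · intro W hW hWn
            have hne : W ≠ S := (Finset.mem_erase.1 hW).1
            rw [hc]; simp [hne, hWn]
        rw [hcS, hrest, one_smul]
        have : ∑ R ∈ children L S, (-1 : ℝ) • cvF a b x R =
            -(∑ R ∈ children L S, cvF a b x R) := by
          rw [← Finset.sum_neg_distrib]
          apply Finset.sum_congr rfl
          intro R _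
          rw [neg_smul, one_smul]
        rw [this]
        rw [add_neg_eq_zero]
        funext i
        rw [Finset.sum_apply]
        by_cases hxi : 0 < x i
        · have hiF : i ∈ F := Finset.mem_filter.2 ⟨Finset.mem_univ i, hxi⟩
          rw [cvF_eq_of_pos a b x hxi, hkey i hiF]
          apply Finset.sum_congr rfl
          intro R _
          rw [cvF_eq_of_pos a b x hxi]
        · rw [cvF_eq_zero a b x hxi]
          symm
          apply Finset.sum_eq_zero
          intro R _
          rw [cvF_eq_zero a b x hxi]
      have := hind c hsum S hS
      rw [hc] at this
      simp at this
    -- integrality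
    rw [hTeq S hS] at hTpos ⊢
    have hch : ∀ R ∈ children L S, xde a b x R = ((f R : ℤ) : ℝ) := by
      intro R hR
      exact htight R (children_mem hR).1
    rw [htight S hS, Finset.sum_congr rfl hch] at hTpos ⊢
    set m : ℕ := (F.filter (fun i =>
      @ite _ (MinE a b L i S) (Classical.dec _) True False)).card with hm
    have hz : ((m : ℤ) + f S - ∑ R ∈ children L S, f R : ℤ) = (m : ℝ) +
        ((f S : ℝ) - ∑ R ∈ children L S, ((f R : ℤ) : ℝ)) := by
      push_cast
      ring
    rw [← hz] at hTpos ⊢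
    have : (0 : ℤ) < (m : ℤ) + f S - ∑ R ∈ children L S, f R := by
      exact_mod_cast hTpos
    have : (1 : ℤ) ≤ (m : ℤ) + f S - ∑ R ∈ children L S, f R := this
    exact_mod_cast this
  -- choose a maximal member and a cut edge of it
  obtain ⟨S0, hS0L, hS0max⟩ := Finset.exists_max_image L Finset.card hLne
  have hvS0 : cvF a b x S0 ≠ 0 := by
    intro h0
    have hsum : ∑ W ∈ L, (fun W => if W = S0 then (1:ℝ) else 0) W • cvF a b x W = 0 := by
      rw [Finset.sum_eq_single_of_mem S0 hS0L]
      · simp [h0]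
      · intro W _ hne
        simp [hne]
    have := hind _ hsum S0 hS0L
    simp at this
  obtain ⟨i0, hi0⟩ := Function.ne_iff.1 hvS0
  have hi0cut : i0 ∈ cutEdges a b S0 ∧ 0 < x i0 := by
    by_contra h
    exact hi0 (indR_of_not _ h)
  have hi0F : i0 ∈ F := Finset.mem_filter.2 ⟨Finset.mem_univ _, hi0cut.2⟩
  have hnomin : ∀ S ∈ L, ¬ MinE a b L i0 S := by
    intro S hS hM
    obtain ⟨_, haS, hbS, _⟩ := hM
    have hcut := (mem_cutEdges a b).1 hi0cut.1
    have hnc := hlam S hS S0 hS0L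
    rw [not_crosses_iff] at hnc
    rcases hnc with h | h | h
    · exact hcut ⟨fun _ => h hbS, fun _ => h haS⟩
    · have : S0 = S := Finset.eq_of_subset_of_card_le h (hS0max S hS)
      rw [← this] at haS hbS
      exact hcut ⟨fun _ => hbS, fun _ => haS⟩
    · have hone : a i0 ∈ S0 ∨ b i0 ∈ S0 := by
        by_contra hn
        push_neg at hn
        exact hcut ⟨fun ha => absurd ha hn.1, fun hb => absurd hb hn.2⟩
      rcases hone with hu | hu
      · have : a i0 ∈ S ∩ S0 := Finset.mem_inter.2 ⟨haS, hu⟩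
        rw [h] at this; exact absurd this (Finset.notMem_empty _)
      · have : b i0 ∈ S ∩ S0 := Finset.mem_inter.2 ⟨hbS, hu⟩
        rw [h] at this; exact absurd this (Finset.notMem_empty _)
  -- per-edge total token bound
  have hbound : ∀ i ∈ F, ∑ S ∈ L, tok i S ≤ 1 := by
    intro i hi
    have hsplit : ∑ S ∈ L, tok i S =
        (∑ S ∈ L, indR (MinV L (a i) S)) * x i + (∑ S ∈ L, indR (MinV L (b i) S)) * x i +
          (∑ S ∈ L, indR (MinE a b L i S)) * (1 - 2 * x i) := by
      rw [htok, Finset.sum_mul, Finset.sum_mul, Finset.sum_mul, ← Finset.sum_add_distrib,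
        ← Finset.sum_add_distrib]
    have h1 : ∑ S ∈ L, indR (MinV L (a i) S) ≤ 1 := by
      rw [sum_indR _ _ (fun R hR R' hR' h h' => minV_unique h h')]
      exact indR_le_one _
    have h2 : ∑ S ∈ L, indR (MinV L (b i) S) ≤ 1 := by
      rw [sum_indR _ _ (fun R hR R' hR' h h' => minV_unique h h')]
      exact indR_le_one _
    have h3 : ∑ S ∈ L, indR (MinE a b L i S) ≤ 1 := by
      rw [sum_indR _ _ (fun R hR R' hR' h h' => minE_unique a b h h')]
      exact indR_le_one _
    have hn1 : 0 ≤ ∑ S ∈ L, indR (MinV L (a i) S) :=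
      Finset.sum_nonneg (fun S _ => indR_nonneg _)
    have hn2 : 0 ≤ ∑ S ∈ L, indR (MinV L (b i) S) :=
      Finset.sum_nonneg (fun S _ => indR_nonneg _)
    have hn3 : 0 ≤ ∑ S ∈ L, indR (MinE a b L i S) :=
      Finset.sum_nonneg (fun S _ => indR_nonneg _)
    have hx := hxF i hi
    have h2x := h2xF i
    rw [hsplit]
    nlinarith
  have hbound0 : ∑ S ∈ L, tok i0 S ≤ 2 * x i0 := by
    have hsplit : ∑ S ∈ L, tok i0 S =
        (∑ S ∈ L, indR (MinV L (a i0) S)) * x i0 + (∑ S ∈ L, indR (MinV L (b i0) S)) * x i0 +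
          (∑ S ∈ L, indR (MinE a b L i0 S)) * (1 - 2 * x i0) := by
      rw [htok, Finset.sum_mul, Finset.sum_mul, Finset.sum_mul, ← Finset.sum_add_distrib,
        ← Finset.sum_add_distrib]
    have h3 : ∑ S ∈ L, indR (MinE a b L i0 S) = 0 := by
      apply Finset.sum_eq_zero
      intro S hS
      exact indR_of_not _ (hnomin S hS)
    have h1 : ∑ S ∈ L, indR (MinV L (a i0) S) ≤ 1 := by
      rw [sum_indR _ _ (fun R hR R' hR' h h' => minV_unique h h')]
      exact indR_le_one _
    have h2 : ∑ S ∈ L, indR (MinV L (b i0) S) ≤ 1 := by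
      rw [sum_indR _ _ (fun R hR R' hR' h h' => minV_unique h h')]
      exact indR_le_one _
    have hn1 : 0 ≤ ∑ S ∈ L, indR (MinV L (a i0) S) :=
      Finset.sum_nonneg (fun S _ => indR_nonneg _)
    have hn2 : 0 ≤ ∑ S ∈ L, indR (MinV L (b i0) S) :=
      Finset.sum_nonneg (fun S _ => indR_nonneg _)
    have hx := hi0cut.2
    rw [hsplit, h3, zero_mul, add_zero]
    nlinarith
  -- total count
  have htotal : ∑ S ∈ L, T S < (F.card : ℝ) := by
    have hswap : ∑ S ∈ L, T S = ∑ i ∈ F, ∑ S ∈ L, tok i S := by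
      rw [hT]
      exact Finset.sum_comm
    rw [hswap, ← Finset.add_sum_erase F _ hi0F]
    have h1 : ∑ i ∈ F.erase i0, ∑ S ∈ L, tok i S ≤ ((F.erase i0).card : ℝ) := by
      calc ∑ i ∈ F.erase i0, ∑ S ∈ L, tok i S ≤ ∑ i ∈ F.erase i0, 1 :=
        Finset.sum_le_sum (fun i hi => hbound i (Finset.mem_of_mem_erase hi))
      _ = ((F.erase i0).card : ℝ) := by rw [Finset.sum_const, nsmul_eq_mul, mul_one]
    have h2 : ((F.erase i0).card : ℝ) = (F.card : ℝ) - 1 := by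
      rw [Finset.card_erase_of_mem hi0F]
      have : 1 ≤ F.card := Finset.card_pos.2 ⟨i0, hi0F⟩
      push_cast [Nat.cast_sub this]
      ring
    have := hhalf i0
    linarith
  have hfinal : (L.card : ℝ) < (F.card : ℝ) := by
    calc (L.card : ℝ) = ∑ S ∈ L, (1:ℝ) := by rw [Finset.sum_const, nsmul_eq_mul, mul_one]
    _ ≤ ∑ S ∈ L, T S := Finset.sum_le_sum hT1
    _ < (F.card : ℝ) := htotal
  exact_mod_cast hfinal


end Jain

end B

/-- Jain's theorem: for a non-trivial skew-supermodular `f`, any extreme point of the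
LP relaxation polytope for covering `f` by the graph has a coordinate of value at least
`1/2`. -/
theorem stmt12 {V ι : Type*} [Fintype V] [DecidableEq V] [Fintype ι]
    (a b : ι → V) (hab : ∀ i, a i ≠ b i)
    (f : Finset V → ℤ) (hf : SkewSupermodular f)
    (hnt : ∃ S : Finset V, S.Nonempty ∧ S ≠ Finset.univ ∧ 0 < f S)
    (P : Set (ι → ℝ))
    (hP : P = {x : ι → ℝ | (∀ i, 0 ≤ x i ∧ x i ≤ 1) ∧
      ∀ S : Finset V, (f S : ℝ) ≤ ∑ i ∈ cutEdges a b S, x i})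
    (xbar : ι → ℝ) (hxbar : xbar ∈ Set.extremePoints ℝ P) :
    ∃ i : ι, (1 : ℝ) / 2 ≤ xbar i := by
  classical
  by_contra hcon
  push_neg at hcon
  have hhalf : ∀ i, xbar i < 1/2 := hcon
  have hxP : xbar ∈ P := (mem_extremePoints.1 hxbar).1
  rw [hP] at hxP
  obtain ⟨hbd, hfe⟩ := hxP
  have hx0 : ∀ i, 0 ≤ xbar i := fun i => (hbd i).1
  have hfeas : ∀ S : Finset V, (f S : ℝ) ≤ Jain.xde a b xbar S := hfe
  have hspan := Jain.span_top a b xbar hP hxbar hhalf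
  obtain ⟨L, hLtight, hLlam, hLind, hLspan⟩ := Jain.exists_laminar a b xbar hf hx0 hfeas
  have hge := Jain.card_F_le a b xbar hx0 hspan hLspan
  have hFne : (Finset.univ.filter (fun i => 0 < xbar i)).Nonempty := by
    obtain ⟨S0, _, _, hfS0⟩ := hnt
    have h1 : (1 : ℝ) ≤ f S0 := by exact_mod_cast hfS0
    have h2 := hfeas S0
    have h3 : 0 < Jain.xde a b xbar S0 := lt_of_lt_of_le (by linarith) h2
    have h4 : ∃ i ∈ cutEdges a b S0, 0 < xbar i := by
      by_contra hn
      push_neg at hn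
      have : Jain.xde a b xbar S0 ≤ 0 := by
        apply Finset.sum_nonpos
        intro i hi
        exact hn i hi
      linarith
    obtain ⟨i, _, hxi⟩ := h4
    exact ⟨i, Finset.mem_filter.2 ⟨Finset.mem_univ _, hxi⟩⟩
  have hLne : L.Nonempty := by
    rw [Finset.nonempty_iff_ne_empty]
    intro h
    rw [h, Finset.card_empty] at hge
    have := Finset.card_pos.2 hFne
    omega
  have hlt := Jain.card_L_lt a b xbar hx0 hhalf hLtight hLlam hLind hLne
  omega
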